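/- arXiv:math/0311318 — 5 statements merged into one kernel-verified Lean document; each statement's English description precedes it below -/
import Mathlib

section
/- Let d ≥ 1 and let m ∈ ℤ^d be nonzero. Let f : ℤ^d → ℚ be the indicator function of the set {k·m : k ∈ ℤ}. Then (1 − e^m) ⋆ f = 0; moreover, for EVERY D ∈ ℚ[ℤ^d] such that D ⋆ f is finitely supported, one has D ⋆ f = 0. In particular f is summable and its sum S(f) is 0 in the fraction field of ℚ[ℤ^d]. (This is the paper's Lemma 9.1: S(Σ_{k=-∞}^{∞} e^{km}) = 0.) -/
/-- The convolution `D ⋆ f` of an element `D` of the group algebra `ℚ[ℤ^d]`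
with a function `f : ℤ^d → ℚ`: `(D ⋆ f)(x) = Σ_{m ∈ support D} D(m) · f(x - m)`. -/
noncomputable def conv {d : ℕ} (D : AddMonoidAlgebra ℚ (Fin d → ℤ)) (f : (Fin d → ℤ) → ℚ) :
    (Fin d → ℤ) → ℚ :=
  fun x => ∑ m ∈ D.coeff.support, D.coeff m * f (x - m)

/-- `e^m`, the basis element of the group algebra `ℚ[ℤ^d]` corresponding to `m ∈ ℤ^d`. -/
noncomputable def expn {d : ℕ} (m : Fin d → ℤ) : AddMonoidAlgebra ℚ (Fin d → ℤ) :=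
  AddMonoidAlgebra.single m 1

lemma conv_eq_sum {d : ℕ} (D : AddMonoidAlgebra ℚ (Fin d → ℤ)) (f : (Fin d → ℤ) → ℚ)
    (x : Fin d → ℤ) : conv D f x = D.coeff.sum fun n c => c * f (x - n) := rfl

/-- Lemma 9.1: for nonzero `m ∈ ℤ^d`, the indicator function `f` of `{k·m : k ∈ ℤ}`
(the "two-sided geometric series" `Σ_{k=-∞}^{∞} e^{km}`) satisfies `(1 - e^m) ⋆ f = 0`;
moreover `D ⋆ f = 0` for every `D` making `D ⋆ f` finitely supported, so `f` is summable
with sum `S(f) = 0` in the fraction field of `ℚ[ℤ^d]`. -/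
theorem sum_two_sided_series_eq_zero {d : ℕ} (hd : 1 ≤ d) (m : Fin d → ℤ) (hm : m ≠ 0)
    (f : (Fin d → ℤ) → ℚ) (hf : f = Set.indicator {x : Fin d → ℤ | ∃ k : ℤ, x = k • m} 1) :
    conv (1 - expn m) f = 0 ∧
      (∀ D : AddMonoidAlgebra ℚ (Fin d → ℤ),
        (Function.support (conv D f)).Finite → conv D f = 0) ∧
      (∀ D P : AddMonoidAlgebra ℚ (Fin d → ℤ), D ≠ 0 → (∀ x, P.coeff x = conv D f x) →
        (algebraMap (AddMonoidAlgebra ℚ (Fin d → ℤ))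
              (FractionRing (AddMonoidAlgebra ℚ (Fin d → ℤ))) P) /
            (algebraMap (AddMonoidAlgebra ℚ (Fin d → ℤ))
              (FractionRing (AddMonoidAlgebra ℚ (Fin d → ℤ))) D) = 0) := by
  -- periodicity of f
  have hper : ∀ x, f (x + m) = f x := by
    intro x
    subst hf
    have hiff : (x + m ∈ {x : Fin d → ℤ | ∃ k : ℤ, x = k • m}) ↔
        (x ∈ {x : Fin d → ℤ | ∃ k : ℤ, x = k • m}) := by
      constructor
      · rintro ⟨k, hk⟩
        exact ⟨k - 1, by rw [sub_smul, one_smul, ← hk]; abel⟩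
      · rintro ⟨k, hk⟩
        exact ⟨k + 1, by rw [add_smul, one_smul, ← hk]⟩
    classical
    rw [Set.indicator_apply, Set.indicator_apply, if_congr hiff rfl rfl]
    simp
  -- periodicity of conv D f
  have hgper : ∀ (D : AddMonoidAlgebra ℚ (Fin d → ℤ)) (x : Fin d → ℤ),
      conv D f (x + m) = conv D f x := by
    intro D x
    unfold conv
    refine Finset.sum_congr rfl fun n _ => ?_
    rw [add_sub_right_comm, hper]
  have hgper' : ∀ (D : AddMonoidAlgebra ℚ (Fin d → ℤ)) (x : Fin d → ℤ) (k : ℤ),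
      conv D f (x + k • m) = conv D f x := by
    intro D x k
    induction k using Int.induction_on with
    | zero => simp
    | succ k ih =>
        have : x + (k + 1 : ℤ) • m = (x + (k : ℤ) • m) + m := by
          rw [add_smul, one_smul]; abel
        rw [this, hgper, ih]
    | pred k ih =>
        have : x + (-(k : ℤ) - 1) • m + m = x + (-(k : ℤ)) • m := by
          rw [sub_smul, one_smul]; abel
        rw [← ih, ← this, hgper]
  have hinj : ∀ x : Fin d → ℤ, Function.Injective (fun k : ℤ => x + k • m) := by
    intro x a b hab
    simp only [add_right_inj] at hab
    obtain ⟨i, hi⟩ := Function.ne_iff.mp hm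
    have := congrFun hab i
    simp only [Pi.smul_apply, smul_eq_mul] at this
    exact mul_right_cancel₀ (by simpa using hi) this
  have main : ∀ D : AddMonoidAlgebra ℚ (Fin d → ℤ),
      (Function.support (conv D f)).Finite → conv D f = 0 := by
    intro D hfin
    funext x
    by_contra hx
    have hsub : Set.range (fun k : ℤ => x + k • m) ⊆ Function.support (conv D f) := by
      rintro _ ⟨k, rfl⟩
      simp only [Function.mem_support]
      rw [hgper']
      exact hx
    exact (Set.infinite_range_of_injective (hinj x)) (hfin.subset hsub)
  refine ⟨?_, main, ?_⟩
  · funext x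
    have h1 : conv (1 - expn m) f x =
        ((1 : AddMonoidAlgebra ℚ (Fin d → ℤ)) - expn m).coeff.sum fun n c => c * f (x - n) :=
      conv_eq_sum _ _ _
    rw [h1]
    have hsub : ((1 : AddMonoidAlgebra ℚ (Fin d → ℤ)) - expn m).coeff.sum (fun n c => c * f (x - n))
        = (1 : AddMonoidAlgebra ℚ (Fin d → ℤ)).coeff.sum (fun n c => c * f (x - n))
          - (expn m).coeff.sum (fun n c => c * f (x - n)) := by
      rw [AddMonoidAlgebra.coeff_sub]
      apply Finsupp.sum_sub_index
      intro a b₁ b₂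
      ring
    rw [hsub]
    have e1 : (1 : AddMonoidAlgebra ℚ (Fin d → ℤ)).coeff.sum (fun n c => c * f (x - n)) = f x := by
      rw [show (1 : AddMonoidAlgebra ℚ (Fin d → ℤ)) = AddMonoidAlgebra.single 0 1 from rfl]
      rw [AddMonoidAlgebra.coeff_single, Finsupp.sum_single_index (by simp)]
      simp
    have e2 : (expn m).coeff.sum (fun n c => c * f (x - n)) = f (x - m) := by
      rw [expn, AddMonoidAlgebra.coeff_single, Finsupp.sum_single_index (by simp)]
      simp
    rw [e1, e2]
    have : f (x - m + m) = f (x - m) := hper _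
    simp only [sub_add_cancel] at this
    simp [this]
  · intro D P hD hP
    have hfin : (Function.support (conv D f)).Finite := by
      apply Set.Finite.subset (P.coeff.support.finite_toSet)
      intro x hx
      simp only [Function.mem_support] at hx
      simp only [Finset.coe_sort_coe, Finset.mem_coe, Finsupp.mem_support_iff]
      rw [hP x]
      exact hx
    have hz := main D hfin
    have hP0 : P = 0 := by
      ext x
      rw [hP x, hz]
      rfl
    rw [hP0]
    simp
end

section
/- Let d ≥ 1, let u ∈ ℤ^d be nonzero, and let f : ℤ^d → ℚ satisfy f(x + u) = f(x) for all x ∈ ℤ^d. Then for every D ∈ ℚ[ℤ^d] such that D ⋆ f is finitely supported, one has D ⋆ f = 0. In particular, if f is summable then its sum S(f) equals 0 in the fraction field of ℚ[ℤ^d]. -/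
/-- If `f : ℤ^d → ℚ` is periodic with respect to a nonzero `u ∈ ℤ^d`, then every
finitely supported convolution `D ⋆ f` vanishes; in particular, if `f` is summable then
its sum `S(f)` is `0` in the fraction field of `ℚ[ℤ^d]`. -/
theorem sum_of_periodic_eq_zero {d : ℕ} (hd : 1 ≤ d) (u : Fin d → ℤ) (hu : u ≠ 0)
    (f : (Fin d → ℤ) → ℚ) (hf : ∀ x, f (x + u) = f x) :
    (∀ D : AddMonoidAlgebra ℚ (Fin d → ℤ),
        (Function.support (conv D f)).Finite → conv D f = 0) ∧
      (∀ D P : AddMonoidAlgebra ℚ (Fin d → ℤ), D ≠ 0 → (∀ x, P.coeff x = conv D f x) →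
        (algebraMap (AddMonoidAlgebra ℚ (Fin d → ℤ))
              (FractionRing (AddMonoidAlgebra ℚ (Fin d → ℤ))) P) /
            (algebraMap (AddMonoidAlgebra ℚ (Fin d → ℤ))
              (FractionRing (AddMonoidAlgebra ℚ (Fin d → ℤ))) D) = 0) := by
  have key : ∀ D : AddMonoidAlgebra ℚ (Fin d → ℤ),
      (Function.support (conv D f)).Finite → conv D f = 0 := by
    intro D hfin
    have hper : ∀ x, conv D f (x + u) = conv D f x := by
      intro x
      unfold conv
      refine Finset.sum_congr rfl fun m _ => ?_
      rw [show x + u - m = (x - m) + u by abel, hf]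
    by_contra hne
    obtain ⟨x0, hx0⟩ : ∃ x, conv D f x ≠ 0 := by
      by_contra h; push_neg at h; exact hne (funext h)
    have hmem : ∀ n : ℕ, x0 + n • u ∈ Function.support (conv D f) := by
      intro n
      induction n with
      | zero => simpa using hx0
      | succ k ih =>
        have hrw : x0 + (k + 1) • u = (x0 + k • u) + u := by
          rw [add_smul, one_smul]; abel
        rw [Function.mem_support, hrw, hper]
        exact ih
    have hinj : Function.Injective (fun n : ℕ => x0 + n • u) := by
      intro n m h
      simp only [add_right_inj] at h
      obtain ⟨i, hi⟩ : ∃ i, u i ≠ 0 := by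
        by_contra h'; push_neg at h'; exact hu (funext h')
      have h2 := congrFun h i
      simp only [Pi.smul_apply, nsmul_eq_mul] at h2
      exact_mod_cast mul_right_cancel₀ hi h2
    exact (Set.infinite_of_injective_forall_mem hinj hmem) hfin
  refine ⟨key, ?_⟩
  intro D P hD hP
  have hfin : (Function.support (conv D f)).Finite := by
    apply Set.Finite.subset P.coeff.support.finite_toSet
    intro x hx
    simp only [Function.mem_support] at hx
    exact Finsupp.mem_support_iff.mpr (by rw [hP x]; exact hx)
  have hz := key D hfin
  have hP0 : P = 0 := by
    ext x
    rw [hP x, hz]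
    rfl
  simp [hP0]
end

section
/- Let d ≥ 1, let f : ℤ^d → ℚ, and let D, D' ∈ ℚ[ℤ^d] be such that P := D ⋆ f and P' := D' ⋆ f are both finitely supported (hence are elements of ℚ[ℤ^d]). Then P · D' = P' · D in ℚ[ℤ^d]. Consequently, if moreover D ≠ 0 and D' ≠ 0, then P/D = P'/D' in the fraction field of ℚ[ℤ^d]; i.e., the Brion–Vergne sum S(f) of a summable function f is well defined, independent of the chosen denominator. -/
/-- Coefficient formula for a product in the group algebra. -/
lemma mul_apply_conv {d : ℕ} (Q E : AddMonoidAlgebra ℚ (Fin d → ℤ)) (x : Fin d → ℤ) :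
    (Q * E).coeff x = ∑ b ∈ E.coeff.support, E.coeff b * Q.coeff (x - b) := by
  classical
  rw [AddMonoidAlgebra.coeff_mul]
  simp only [Finsupp.sum]
  rw [Finset.sum_comm]
  refine Finset.sum_congr rfl fun b hb => ?_
  have h1 : ∀ a ∈ Q.coeff.support, (if a + b = x then Q.coeff a * E.coeff b else 0)
      = if a = x - b then Q.coeff a * E.coeff b else 0 := by
    intro a _
    congr 1
    simp [eq_sub_iff_add_eq]
  rw [Finset.sum_congr rfl h1, Finset.sum_ite_eq' Q.coeff.support (x - b) (fun a => Q.coeff a * E.coeff b)]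
  by_cases h : x - b ∈ Q.coeff.support
  · simp [h, mul_comm]
  · simp only [h, if_false]
    rw [Finsupp.notMem_support_iff.mp h]
    ring

/-- The Brion–Vergne sum is well defined: if `D ⋆ f` and `D' ⋆ f` are both finitely
supported, given by `P, P' ∈ ℚ[ℤ^d]`, then `P · D' = P' · D`, and hence
`P/D = P'/D'` in the fraction field when `D, D' ≠ 0`. -/
theorem sum_well_defined {d : ℕ} (hd : 1 ≤ d) (f : (Fin d → ℤ) → ℚ)
    (D D' P P' : AddMonoidAlgebra ℚ (Fin d → ℤ))
    (hP : ∀ x, P.coeff x = conv D f x) (hP' : ∀ x, P'.coeff x = conv D' f x) :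
    P * D' = P' * D ∧
      (D ≠ 0 → D' ≠ 0 →
        (algebraMap (AddMonoidAlgebra ℚ (Fin d → ℤ))
              (FractionRing (AddMonoidAlgebra ℚ (Fin d → ℤ))) P) /
            (algebraMap (AddMonoidAlgebra ℚ (Fin d → ℤ))
              (FractionRing (AddMonoidAlgebra ℚ (Fin d → ℤ))) D) =
          (algebraMap (AddMonoidAlgebra ℚ (Fin d → ℤ))
              (FractionRing (AddMonoidAlgebra ℚ (Fin d → ℤ))) P') /
            (algebraMap (AddMonoidAlgebra ℚ (Fin d → ℤ))
              (FractionRing (AddMonoidAlgebra ℚ (Fin d → ℤ))) D')) := by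
  have key : P * D' = P' * D := by
    refine AddMonoidAlgebra.ext (Finsupp.ext fun x => ?_)
    rw [mul_apply_conv, mul_apply_conv]
    simp only [hP, hP', conv, Finset.mul_sum]
    rw [Finset.sum_comm]
    refine Finset.sum_congr rfl fun m _ => Finset.sum_congr rfl fun b _ => ?_
    rw [sub_right_comm]
    ring
  refine ⟨key, fun hD hD' => ?_⟩
  have hD0 : (algebraMap (AddMonoidAlgebra ℚ (Fin d → ℤ))
      (FractionRing (AddMonoidAlgebra ℚ (Fin d → ℤ)))) D ≠ 0 := fun h =>
    hD (IsFractionRing.to_map_eq_zero_iff.mp h)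
  have hD'0 : (algebraMap (AddMonoidAlgebra ℚ (Fin d → ℤ))
      (FractionRing (AddMonoidAlgebra ℚ (Fin d → ℤ)))) D' ≠ 0 := fun h =>
    hD' (IsFractionRing.to_map_eq_zero_iff.mp h)
  rw [div_eq_div_iff hD0 hD'0, ← map_mul, ← map_mul, key]
end

section
/- Let d ≥ 1 and let C = {t_1 v_1 + … + t_s v_s : t_i ∈ ℚ, t_i ≥ 0} ⊆ ℚ^d be the rational polyhedral cone generated by vectors v_1, …, v_s ∈ ℤ^d. Then the indicator function 1_{C ∩ ℤ^d} : ℤ^d → ℚ of the set of lattice points of C is summable: there exist finitely many nonzero m_1, …, m_r ∈ ℤ^d such that (∏_{i=1}^r (1 − e^{m_i})) ⋆ 1_{C ∩ ℤ^d} is finitely supported. (This is the paper's Lemma 9.3: the generating function A_σ = Σ_{m ∈ σ̌ ∩ M} e^m is summable.) -/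
set_option maxHeartbeats 1000000

section Aux

noncomputable def dotq {d : ℕ} (a x : Fin d → ℚ) : ℚ := ∑ j, a j * x j

lemma dotq_zero_left {d : ℕ} (x : Fin d → ℚ) : dotq 0 x = 0 := by simp [dotq]
lemma dotq_sub_right {d : ℕ} (a x y : Fin d → ℚ) : dotq a (x - y) = dotq a x - dotq a y := by
  simp [dotq, mul_sub, Finset.sum_sub_distrib]
lemma dotq_add_right {d : ℕ} (a x y : Fin d → ℚ) : dotq a (x + y) = dotq a x + dotq a y := by
  simp [dotq, mul_add, Finset.sum_add_distrib]
lemma dotq_smul_right {d : ℕ} (a : Fin d → ℚ) (c : ℚ) (x : Fin d → ℚ) :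
    dotq a (c • x) = c * dotq a x := by
  simp [dotq, Finset.mul_sum]; apply Finset.sum_congr rfl; intros; ring
lemma dotq_sub_left {d : ℕ} (a b x : Fin d → ℚ) : dotq (a - b) x = dotq a x - dotq b x := by
  simp [dotq, sub_mul, Finset.sum_sub_distrib]
lemma dotq_smul_left {d : ℕ} (c : ℚ) (a x : Fin d → ℚ) : dotq (c • a) x = c * dotq a x := by
  simp [dotq, Finset.mul_sum]; apply Finset.sum_congr rfl; intros; ring
lemma dotq_sum_right {d : ℕ} {ι : Type*} (a : Fin d → ℚ) (S : Finset ι) (g : ι → Fin d → ℚ) :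
    dotq a (∑ i ∈ S, g i) = ∑ i ∈ S, dotq a (g i) := by
  classical
  induction S using Finset.induction_on with
  | empty => simp [dotq]
  | @insert i S hi ih => rw [Finset.sum_insert hi, dotq_add_right, ih, Finset.sum_insert hi]
lemma dotq_single_left {d : ℕ} (j : Fin d) (c : ℚ) (x : Fin d → ℚ) :
    dotq (Pi.single j c) x = c * x j := by
  unfold dotq
  rw [Finset.sum_eq_single j]
  · simp
  · intro b _ hb; simp [Pi.single_apply, hb]
  · simp

/-- Weyl: a finitely generated cone in `ℚ^d` is a finite intersection of halfspaces. -/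
lemma weyl {d : ℕ} (s : ℕ) (v : Fin s → (Fin d → ℚ)) :
    ∃ A : Finset (Fin d → ℚ), ∀ x : Fin d → ℚ,
      (∃ t : Fin s → ℚ, (∀ i, 0 ≤ t i) ∧ x = ∑ i, t i • v i) ↔ (∀ a ∈ A, 0 ≤ dotq a x) := by
  classical
  induction s with
  | zero =>
    refine ⟨(Finset.univ.image fun j => Pi.single j (1:ℚ)) ∪
      (Finset.univ.image fun j => Pi.single j (-1:ℚ)), fun x => ?_⟩
    constructor
    · rintro ⟨t, -, rfl⟩
      intro a _
      simp [dotq]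
    · intro h
      refine ⟨Fin.elim0, fun i => i.elim0, ?_⟩
      have hx : ∀ j, x j = 0 := by
        intro j
        have h1 := h (Pi.single j (1:ℚ)) (Finset.mem_union_left _
          (Finset.mem_image.mpr ⟨j, Finset.mem_univ j, rfl⟩))
        have h2 := h (Pi.single j (-1:ℚ)) (Finset.mem_union_right _
          (Finset.mem_image.mpr ⟨j, Finset.mem_univ j, rfl⟩))
        rw [dotq_single_left] at h1 h2
        linarith
      funext j
      simp [hx j]
  | succ s ih =>
    obtain ⟨A, hA⟩ := ih (fun i => v i.castSucc)
    set u := v (Fin.last s) with hu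
    refine ⟨(A.filter (fun a => 0 ≤ dotq a u)) ∪
      ((A ×ˢ A).image (fun p =>
        if 0 < dotq p.1 u ∧ dotq p.2 u < 0 then
          (dotq p.1 u) • p.2 - (dotq p.2 u) • p.1 else 0)), fun x => ?_⟩
    have key : (∃ t : Fin (s+1) → ℚ, (∀ i, 0 ≤ t i) ∧ x = ∑ i, t i • v i) ↔
        (∃ τ : ℚ, 0 ≤ τ ∧ ∀ a ∈ A, 0 ≤ dotq a (x - τ • u)) := by
      constructor
      · rintro ⟨t, ht, rfl⟩
        refine ⟨t (Fin.last s), ht _, ?_⟩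
        have hsum : ∑ i, t i • v i = (∑ i : Fin s, t i.castSucc • v i.castSucc)
            + t (Fin.last s) • u := Fin.sum_univ_castSucc _
        have : (∑ i : Fin (s+1), t i • v i) - t (Fin.last s) • u
            = ∑ i : Fin s, t i.castSucc • v i.castSucc := by rw [hsum]; abel
        rw [this]
        exact (hA _).mp ⟨fun i => t i.castSucc, fun i => ht _, rfl⟩
      · rintro ⟨τ, hτ, hy⟩
        obtain ⟨t', ht', hx'⟩ := (hA _).mpr hy
        refine ⟨Fin.lastCases τ t', ?_, ?_⟩
        · intro i
          refine Fin.lastCases ?_ ?_ i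
          · simpa using hτ
          · intro j; simpa using ht' j
        · rw [Fin.sum_univ_castSucc]
          simp only [Fin.lastCases_castSucc, Fin.lastCases_last]
          rw [← hx']
          abel
    rw [key]
    constructor
    · rintro ⟨τ, hτ, hy⟩
      intro a ha
      rcases Finset.mem_union.mp ha with ha | ha
      · obtain ⟨haA, hau⟩ := Finset.mem_filter.mp ha
        have := hy a haA
        rw [dotq_sub_right, dotq_smul_right] at this
        nlinarith
      · obtain ⟨⟨p, q⟩, hpq, rfl⟩ := Finset.mem_image.mp ha
        obtain ⟨hp, hq⟩ := Finset.mem_product.mp hpq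
        by_cases hcond : 0 < dotq p u ∧ dotq q u < 0
        · rw [if_pos hcond, dotq_sub_left, dotq_smul_left, dotq_smul_left]
          have h1 := hy p hp
          have h2 := hy q hq
          rw [dotq_sub_right, dotq_smul_right] at h1 h2
          nlinarith [hcond.1, hcond.2]
        · rw [if_neg hcond, dotq_zero_left]
    · intro h
      have hfilter : ∀ a ∈ A, 0 ≤ dotq a u → 0 ≤ dotq a x := by
        intro a ha hau
        exact h a (Finset.mem_union_left _ (Finset.mem_filter.mpr ⟨ha, hau⟩))
      have hpair : ∀ p ∈ A, ∀ q ∈ A, 0 < dotq p u → dotq q u < 0 →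
          0 ≤ dotq p u * dotq q x - dotq q u * dotq p x := by
        intro p hp q hq h1 h2
        have := h _ (Finset.mem_union_right _ (Finset.mem_image.mpr
          ⟨(p, q), Finset.mem_product.mpr ⟨hp, hq⟩, rfl⟩))
        rw [if_pos ⟨h1, h2⟩, dotq_sub_left, dotq_smul_left, dotq_smul_left] at this
        linarith
      set L : Finset ℚ := insert 0 ((A.filter (fun a => dotq a u < 0)).image
        (fun a => dotq a x / dotq a u)) with hL
      have hLne : L.Nonempty := ⟨0, Finset.mem_insert_self _ _⟩
      set τ := L.max' hLne with hτdef
      have hτ0 : 0 ≤ τ := Finset.le_max' L 0 (Finset.mem_insert_self _ _)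
      refine ⟨τ, hτ0, ?_⟩
      intro a ha
      rw [dotq_sub_right, dotq_smul_right]
      rcases lt_trichotomy (dotq a u) 0 with hau | hau | hau
      · have hmem : dotq a x / dotq a u ∈ L := by
          rw [hL]
          exact Finset.mem_insert_of_mem (Finset.mem_image.mpr
            ⟨a, Finset.mem_filter.mpr ⟨ha, hau⟩, rfl⟩)
        have hle : dotq a x / dotq a u ≤ τ := Finset.le_max' L _ hmem
        have := (div_le_iff_of_neg hau).mp hle
        linarith
      · rw [hau, mul_zero, sub_zero]
        exact hfilter a ha (le_of_eq hau.symm)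
      · have hmem := Finset.max'_mem L hLne
        rw [← hτdef] at hmem
        rcases Finset.mem_insert.mp hmem with h0 | himg
        · rw [h0, zero_mul, sub_zero]
          exact hfilter a ha (le_of_lt hau)
        · obtain ⟨b, hb, hbeq⟩ := Finset.mem_image.mp himg
          obtain ⟨hbA, hbu⟩ := Finset.mem_filter.mp hb
          have hpq := hpair a ha b hbA hau hbu
          have hbne : dotq b u ≠ 0 := ne_of_lt hbu
          have hτb : τ * dotq b u = dotq b x := by
            rw [← hbeq, div_mul_cancel₀ _ hbne]
          nlinarith

lemma conv_eq_sum_s3 {d : ℕ} (D : AddMonoidAlgebra ℚ (Fin d → ℤ)) (f : (Fin d → ℤ) → ℚ)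
    (T : Finset (Fin d → ℤ)) (hT : D.coeff.support ⊆ T) (x : Fin d → ℤ) :
    conv D f x = ∑ m ∈ T, D.coeff m * f (x - m) := by
  exact Finset.sum_subset hT (fun m _ hm => by
    rw [Finsupp.notMem_support_iff.mp hm, zero_mul])

lemma conv_sub {d : ℕ} (D E : AddMonoidAlgebra ℚ (Fin d → ℤ)) (f : (Fin d → ℤ) → ℚ) (x) :
    conv (D - E) f x = conv D f x - conv E f x := by
  classical
  have h1 := conv_eq_sum_s3 (D - E) f (D.coeff.support ∪ E.coeff.support ∪ (D - E).coeff.support)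
    (by intro m hm; exact Finset.mem_union_right _ hm) x
  have h2 := conv_eq_sum_s3 D f (D.coeff.support ∪ E.coeff.support ∪ (D - E).coeff.support)
    (by intro m hm; exact Finset.mem_union_left _ (Finset.mem_union_left _ hm)) x
  have h3 := conv_eq_sum_s3 E f (D.coeff.support ∪ E.coeff.support ∪ (D - E).coeff.support)
    (by intro m hm; exact Finset.mem_union_left _ (Finset.mem_union_right _ hm)) x
  rw [h1, h2, h3, ← Finset.sum_sub_distrib]
  apply Finset.sum_congr rfl
  intro m _
  rw [AddMonoidAlgebra.coeff_sub, Finsupp.sub_apply, sub_mul]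

lemma conv_one {d : ℕ} (f : (Fin d → ℤ) → ℚ) (x) : conv 1 f x = f x := by
  classical
  rw [conv_eq_sum_s3 1 f {0} (by rw [AddMonoidAlgebra.one_def]; exact Finsupp.support_single_subset)]
  simp [AddMonoidAlgebra.one_def]

lemma conv_expn_mul {d : ℕ} (a : Fin d → ℤ) (D : AddMonoidAlgebra ℚ (Fin d → ℤ))
    (f : (Fin d → ℤ) → ℚ) (x) :
    conv (expn a * D) f x = conv D f (x - a) := by
  classical
  have happ : ∀ n, (expn a * D).coeff n = D.coeff (n - a) := by
    intro n
    rw [expn, AddMonoidAlgebra.coeff_single_mul_apply, one_mul, neg_add_eq_sub]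
  have hsupp : (expn a * D).coeff.support ⊆ D.coeff.support.map (addLeftEmbedding a) := by
    intro n hn
    rw [Finsupp.mem_support_iff, happ] at hn
    rw [Finset.mem_map]
    exact ⟨n - a, Finsupp.mem_support_iff.mpr hn, by simp [addLeftEmbedding]⟩
  rw [conv_eq_sum_s3 _ f _ hsupp, Finset.sum_map]
  unfold conv
  apply Finset.sum_congr rfl
  intro m _
  have : addLeftEmbedding a m = a + m := rfl
  rw [this, happ]
  congr 2
  · abel
  · abel

lemma conv_prod_eq {d : ℕ} {ι : Type*} [DecidableEq ι] (t : Finset ι) (m : ι → (Fin d → ℤ))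
    (f : (Fin d → ℤ) → ℚ) (x) :
    conv (∏ i ∈ t, (1 - expn (m i))) f x
      = ∑ S ∈ t.powerset, (-1 : ℚ) ^ S.card * f (x - ∑ i ∈ S, m i) := by
  classical
  induction t using Finset.induction_on generalizing x with
  | empty => simp [conv_one]
  | @insert a t ha ih =>
    rw [Finset.prod_insert ha, sub_mul, one_mul, conv_sub, conv_expn_mul,
      Finset.sum_powerset_insert ha]
    rw [ih x, ih (x - m a)]
    rw [sub_eq_add_neg, ← Finset.sum_neg_distrib]
    congr 1
    apply Finset.sum_congr rfl
    intro S hS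
    have haS : a ∉ S := fun h => ha (Finset.mem_powerset.mp hS h)
    rw [Finset.card_insert_of_notMem haS, Finset.sum_insert haS, pow_succ]
    have : x - (m a + ∑ i ∈ S, m i) = x - m a - ∑ i ∈ S, m i := by abel
    rw [this]
    ring

end Aux

/-- Lemma 9.3: for the rational polyhedral cone `C ⊆ ℚ^d` generated by lattice vectors
`v_1, …, v_s ∈ ℤ^d`, the indicator function of the lattice points of `C` is summable:
some product `∏ (1 - e^{m_i})`, with all `m_i ≠ 0`, convolves it to a finitely
supported function. -/
theorem indicator_cone_summable {d : ℕ} (hd : 1 ≤ d) (s : ℕ) (v : Fin s → (Fin d → ℤ))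
    (C : Set (Fin d → ℚ))
    (hC : C = {x : Fin d → ℚ | ∃ t : Fin s → ℚ,
      (∀ i, 0 ≤ t i) ∧ x = ∑ i, t i • (fun j => ((v i j : ℚ)))})
    (f : (Fin d → ℤ) → ℚ)
    (hf : f = Set.indicator {x : Fin d → ℤ | (fun j => ((x j : ℚ))) ∈ C} 1) :
    ∃ (r : ℕ) (m : Fin r → (Fin d → ℤ)), (∀ i, m i ≠ 0) ∧
      (Function.support (conv (∏ i, (1 - expn (m i))) f)).Finite := by
  classical
  set vq : Fin s → (Fin d → ℚ) := fun i j => ((v i j : ℚ)) with hvq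
  obtain ⟨A, hA⟩ := weyl s vq
  have hCmem : ∀ q : Fin d → ℚ, q ∈ C ↔ ∀ a ∈ A, 0 ≤ dotq a q := by
    intro q
    rw [hC, Set.mem_setOf_eq]
    exact hA q
  have hCrep : ∀ q : Fin d → ℚ, q ∈ C →
      ∃ tc : Fin s → ℚ, (∀ i, 0 ≤ tc i) ∧ q = ∑ i, tc i • vq i := by
    intro q hq
    rw [hC, Set.mem_setOf_eq] at hq
    exact hq
  have hind : ∀ y : Fin d → ℤ, f y = if (fun j => ((y j : ℚ))) ∈ C then 1 else 0 := by
    intro y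
    rw [hf]
    by_cases h : (fun j => ((y j : ℚ))) ∈ C
    · rw [if_pos h]
      exact Set.indicator_of_mem
        (show y ∈ {x : Fin d → ℤ | (fun j => ((x j : ℚ))) ∈ C} from h) 1
    · rw [if_neg h]
      exact Set.indicator_of_notMem
        (show y ∉ {x : Fin d → ℤ | (fun j => ((x j : ℚ))) ∈ C} from h) 1
  have hgen : ∀ i, ∀ a ∈ A, 0 ≤ dotq a (vq i) := by
    intro i a ha
    refine (hA (vq i)).mp ⟨Pi.single i 1, fun j => ?_, ?_⟩ a ha
    · rw [Pi.single_apply]; split <;> norm_num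
    · rw [Finset.sum_eq_single i]
      · rw [Pi.single_eq_same, one_smul]
      · intro b _ hb; rw [Pi.single_eq_of_ne hb, zero_smul]
      · intro h; exact absurd (Finset.mem_univ i) h
  set P : ℚ := ∑ a ∈ A, ∑ i : Fin s, |dotq a (vq i)| with hP
  have hP0 : 0 ≤ P :=
    Finset.sum_nonneg fun a _ => Finset.sum_nonneg fun i _ => abs_nonneg _
  set M : ℚ := 3 * P + 1 with hM
  have hM0 : 0 < M := by rw [hM]; linarith
  set Tm : ℚ := M * ∑ a ∈ A, ∑ i : Fin s,
      (if 0 < dotq a (vq i) then (dotq a (vq i))⁻¹ else 0) with hTm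
  have hTm0 : 0 ≤ Tm := by
    apply mul_nonneg (le_of_lt hM0)
    apply Finset.sum_nonneg; intro a _
    apply Finset.sum_nonneg; intro i _
    split
    · exact inv_nonneg.mpr (le_of_lt ‹_›)
    · exact le_refl 0
  set W : ℚ := ∑ i : Fin s, ∑ c : Fin d, |vq i c| with hW
  set N : ℚ := Tm * W + W with hN
  have habs : ∀ a ∈ A, ∀ S : Finset (Fin s), |dotq a (∑ i ∈ S, vq i)| ≤ P := by
    intro a ha S
    rw [dotq_sum_right]
    calc |∑ i ∈ S, dotq a (vq i)| ≤ ∑ i ∈ S, |dotq a (vq i)| :=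
          Finset.abs_sum_le_sum_abs _ _
      _ ≤ ∑ i : Fin s, |dotq a (vq i)| :=
          Finset.sum_le_sum_of_subset_of_nonneg (Finset.subset_univ S)
            (fun i _ _ => abs_nonneg _)
      _ ≤ P := Finset.single_le_sum (f := fun a => ∑ i : Fin s, |dotq a (vq i)|)
          (fun b _ => Finset.sum_nonneg fun i _ => abs_nonneg _) ha
  have habs1 : ∀ a ∈ A, ∀ i, |dotq a (vq i)| ≤ P := by
    intro a ha i
    have := habs a ha {i}
    rwa [Finset.sum_singleton] at this
  have hWc : ∀ c : Fin d, ∀ S : Finset (Fin s), |(∑ i ∈ S, vq i) c| ≤ W := by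
    intro c S
    rw [Finset.sum_apply]
    calc |∑ i ∈ S, vq i c| ≤ ∑ i ∈ S, |vq i c| := Finset.abs_sum_le_sum_abs _ _
      _ ≤ ∑ i : Fin s, |vq i c| :=
          Finset.sum_le_sum_of_subset_of_nonneg (Finset.subset_univ S)
            (fun i _ _ => abs_nonneg _)
      _ ≤ W := Finset.sum_le_sum fun i _ =>
          Finset.single_le_sum (f := fun c' => |vq i c'|) (fun c' _ => abs_nonneg _)
            (Finset.mem_univ c)
  have hcast : ∀ (y : Fin d → ℤ) (S : Finset (Fin s)),
      (fun j => (((y - ∑ i ∈ S, v i) j : ℚ))) = (fun j => ((y j : ℚ))) - ∑ i ∈ S, vq i := by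
    intro y S
    funext j
    simp only [Pi.sub_apply, Finset.sum_apply, hvq]
    push_cast
    ring
  set t₀ : Finset (Fin s) := Finset.univ.filter (fun i => v i ≠ 0) with ht₀
  -- main support bound
  have hsupp : ∀ x : Fin d → ℤ,
      (∑ S ∈ t₀.powerset, (-1:ℚ) ^ S.card * f (x - ∑ i ∈ S, v i)) ≠ 0 →
      ∀ c, |((x c : ℚ))| ≤ N := by
    intro x hx c
    obtain ⟨S0, hS0p, hS0ne⟩ := Finset.exists_ne_zero_of_sum_ne_zero hx
    have hfne : f (x - ∑ i ∈ S0, v i) ≠ 0 := fun h => hS0ne (by rw [h, mul_zero])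
    have hmem0 : ((fun j => ((x j : ℚ))) - ∑ i ∈ S0, vq i) ∈ C := by
      rw [hind, hcast] at hfne
      by_contra h
      exact hfne (if_neg h)
    have hx'A : ∀ a ∈ A, 0 ≤ dotq a ((fun j => ((x j : ℚ))) - ∑ i ∈ S0, vq i) :=
      (hCmem _).mp hmem0
    by_cases hgood : ∃ i, v i ≠ 0 ∧ ∀ a ∈ A,
        dotq a ((fun j => ((x j : ℚ))) - ∑ i ∈ S0, vq i) < M → dotq a (vq i) = 0
    · exfalso
      obtain ⟨i, hvne, hperp⟩ := hgood
      have hit : i ∈ t₀ := by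
        rw [ht₀]; exact Finset.mem_filter.mpr ⟨Finset.mem_univ i, hvne⟩
      have hiff : ∀ S : Finset (Fin s), i ∉ S →
          ((((fun j => ((x j : ℚ))) - ∑ jj ∈ S, vq jj) ∈ C) ↔
           (((fun j => ((x j : ℚ))) - ∑ jj ∈ insert i S, vq jj) ∈ C)) := by
        intro S hiS
        rw [hCmem, hCmem]
        have hins : (∑ jj ∈ insert i S, vq jj) = vq i + ∑ jj ∈ S, vq jj :=
          Finset.sum_insert hiS
        constructor
        · intro hq a ha
          rw [hins]
          have e1 : dotq a ((fun j => ((x j : ℚ))) - (vq i + ∑ jj ∈ S, vq jj))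
              = dotq a ((fun j => ((x j : ℚ))) - ∑ jj ∈ S, vq jj) - dotq a (vq i) := by
            rw [dotq_sub_right, dotq_sub_right, dotq_add_right]; ring
          rw [e1]
          by_cases hsm : dotq a ((fun j => ((x j : ℚ))) - ∑ i ∈ S0, vq i) < M
          · rw [hperp a ha hsm, sub_zero]; exact hq a ha
          · push_neg at hsm
            have e2 : dotq a ((fun j => ((x j : ℚ))) - ∑ jj ∈ S, vq jj)
                = dotq a ((fun j => ((x j : ℚ))) - ∑ i ∈ S0, vq i)
                  + dotq a (∑ i ∈ S0, vq i) - dotq a (∑ jj ∈ S, vq jj) := by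
              simp only [dotq_sub_right]; ring
            have b1 := abs_le.mp (habs a ha S0)
            have b2 := abs_le.mp (habs a ha S)
            have b3 := abs_le.mp (habs1 a ha i)
            rw [e2]
            rw [hM] at hsm
            linarith [b1.1, b2.2, b3.2]
        · intro hq a ha
          have hq' := hq a ha
          rw [hins] at hq'
          have e1 : dotq a ((fun j => ((x j : ℚ))) - ∑ jj ∈ S, vq jj)
              = dotq a ((fun j => ((x j : ℚ))) - (vq i + ∑ jj ∈ S, vq jj)) + dotq a (vq i) := by
            rw [dotq_sub_right, dotq_sub_right, dotq_add_right]; ring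
          rw [e1]
          have := hgen i a ha
          linarith
      apply hx
      rw [← Finset.insert_erase hit,
        Finset.sum_powerset_insert (Finset.notMem_erase i t₀), ← Finset.sum_add_distrib]
      apply Finset.sum_eq_zero
      intro S hS
      have hiS : i ∉ S := fun h => Finset.notMem_erase i t₀ (Finset.mem_powerset.mp hS h)
      have hfeq : f (x - ∑ jj ∈ S, v jj) = f (x - ∑ jj ∈ insert i S, v jj) := by
        rw [hind, hind]
        refine if_congr ?_ rfl rfl
        rw [hcast, hcast]
        exact hiff S hiS
      rw [Finset.card_insert_of_notMem hiS, ← hfeq, pow_succ]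
      ring
    · push_neg at hgood
      obtain ⟨tc, htc0, htcx⟩ := hCrep _ hmem0
      have htcb : ∀ i, v i ≠ 0 → tc i ≤ Tm := by
        intro i hvne
        obtain ⟨a, ha, haM, hane⟩ := hgood i hvne
        have hpos : 0 < dotq a (vq i) := lt_of_le_of_ne (hgen i a ha) (Ne.symm hane)
        have hsum : dotq a ((fun j => ((x j : ℚ))) - ∑ i ∈ S0, vq i)
            = ∑ jj, tc jj * dotq a (vq jj) := by
          rw [htcx, dotq_sum_right]
          apply Finset.sum_congr rfl
          intro jj _
          rw [dotq_smul_right]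
        have hle : tc i * dotq a (vq i) ≤ ∑ jj, tc jj * dotq a (vq jj) :=
          Finset.single_le_sum (fun jj _ => mul_nonneg (htc0 jj) (hgen jj a ha))
            (Finset.mem_univ i)
        have h1 : tc i * dotq a (vq i) < M := by
          rw [← hsum] at hle; linarith
        have h2 : tc i ≤ M * (dotq a (vq i))⁻¹ := by
          rw [← div_eq_mul_inv, le_div_iff₀ hpos]
          linarith
        have h3 : (dotq a (vq i))⁻¹ ≤ ∑ a' ∈ A, ∑ jj : Fin s,
            (if 0 < dotq a' (vq jj) then (dotq a' (vq jj))⁻¹ else 0) := by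
          have hstep : (dotq a (vq i))⁻¹ ≤ ∑ jj : Fin s,
              (if 0 < dotq a (vq jj) then (dotq a (vq jj))⁻¹ else 0) := by
            have h4 := Finset.single_le_sum
              (f := fun jj => if 0 < dotq a (vq jj) then (dotq a (vq jj))⁻¹ else 0)
              (fun jj _ => by
                split
                · exact inv_nonneg.mpr (le_of_lt ‹_›)
                · exact le_refl 0) (Finset.mem_univ i)
            rwa [if_pos hpos] at h4
          refine le_trans hstep ?_
          exact Finset.single_le_sum
            (f := fun a' => ∑ jj : Fin s,
              (if 0 < dotq a' (vq jj) then (dotq a' (vq jj))⁻¹ else 0))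
            (fun a' _ => Finset.sum_nonneg fun jj _ => by
              split
              · exact inv_nonneg.mpr (le_of_lt ‹_›)
              · exact le_refl 0) ha
        calc tc i ≤ M * (dotq a (vq i))⁻¹ := h2
          _ ≤ Tm := by rw [hTm]; exact mul_le_mul_of_nonneg_left h3 (le_of_lt hM0)
      have hx'c : ((fun j => ((x j : ℚ))) - ∑ i ∈ S0, vq i) c
          = ∑ i : Fin s, tc i * vq i c := by
        rw [htcx, Finset.sum_apply]
        apply Finset.sum_congr rfl
        intros
        rw [Pi.smul_apply, smul_eq_mul]
      have hb1 : |((fun j => ((x j : ℚ))) - ∑ i ∈ S0, vq i) c| ≤ Tm * W := by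
        rw [hx'c]
        calc |∑ i : Fin s, tc i * vq i c| ≤ ∑ i : Fin s, |tc i * vq i c| :=
              Finset.abs_sum_le_sum_abs _ _
          _ ≤ ∑ i : Fin s, Tm * |vq i c| := by
              apply Finset.sum_le_sum
              intro i _
              rw [abs_mul, abs_of_nonneg (htc0 i)]
              by_cases hvi : v i = 0
              · have hz : vq i c = 0 := by rw [hvq]; simp [hvi]
                rw [hz, abs_zero, mul_zero, mul_zero]
              · exact mul_le_mul_of_nonneg_right (htcb i hvi) (abs_nonneg _)
          _ = Tm * ∑ i : Fin s, |vq i c| := (Finset.mul_sum _ _ _).symm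
          _ ≤ Tm * W := by
              apply mul_le_mul_of_nonneg_left _ hTm0
              apply Finset.sum_le_sum
              intro i _
              exact Finset.single_le_sum (f := fun c' => |vq i c'|)
                (fun c' _ => abs_nonneg _) (Finset.mem_univ c)
      have hb2 : |(∑ i ∈ S0, vq i) c| ≤ W := hWc c S0
      have hxe : ((x c : ℚ))
          = (((fun j => ((x j : ℚ))) - ∑ i ∈ S0, vq i) c) + (∑ i ∈ S0, vq i) c := by
        simp [Pi.sub_apply]
      rw [hN, hxe]
      calc |_ + _| ≤ |(((fun j => ((x j : ℚ))) - ∑ i ∈ S0, vq i) c)| + |(∑ i ∈ S0, vq i) c| :=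
            abs_add_le _ _
        _ ≤ Tm * W + W := add_le_add hb1 hb2
  -- finiteness of the bounded region
  have hfin : {y : Fin d → ℤ | ∀ c, |((y c : ℚ))| ≤ N}.Finite := by
    have hsub : {y : Fin d → ℤ | ∀ c, |((y c : ℚ))| ≤ N} ⊆
        Set.univ.pi (fun _ : Fin d => Set.Icc (-(⌈N⌉)) ⌈N⌉) := by
      intro y hy c _
      have h1 := abs_le.mp (hy c)
      constructor
      · have : ((-⌈N⌉ : ℤ) : ℚ) ≤ ((y c : ℚ)) := by
          push_cast
          linarith [Int.le_ceil N]
        exact_mod_cast this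
      · have : ((y c : ℚ)) ≤ ((⌈N⌉ : ℤ) : ℚ) := by
          push_cast
          linarith [Int.le_ceil N]
        exact_mod_cast this
    exact Set.Finite.subset (Set.Finite.pi fun _ => Set.finite_Icc _ _) hsub
  -- final assembly
  refine ⟨t₀.card, fun k => v ((t₀.equivFin.symm k) : Fin s), fun k => ?_, ?_⟩
  · exact (Finset.mem_filter.mp (t₀.equivFin.symm k).2).2
  · have hprod : (∏ k : Fin t₀.card, (1 - expn (v ((t₀.equivFin.symm k) : Fin s))))
        = ∏ i ∈ t₀, (1 - expn (v i)) := by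
      calc (∏ k : Fin t₀.card, (1 - expn (v ((t₀.equivFin.symm k) : Fin s))))
          = ∏ j : {i // i ∈ t₀}, (1 - expn (v (j : Fin s))) :=
            Equiv.prod_comp t₀.equivFin.symm (fun j : {i // i ∈ t₀} => 1 - expn (v (j : Fin s)))
        _ = ∏ j ∈ t₀.attach, (1 - expn (v (j : Fin s))) := by
            rw [Finset.univ_eq_attach]
        _ = ∏ i ∈ t₀, (1 - expn (v i)) := Finset.prod_attach t₀ (fun i => 1 - expn (v i))
    apply hfin.subset
    intro x hx
    rw [Function.mem_support] at hx
    have hx' : conv (∏ i ∈ t₀, (1 - expn (v i))) f x ≠ 0 := by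
      rw [← hprod]
      exact hx
    rw [conv_prod_eq] at hx'
    exact hsupp x hx'
end

section
/- Let d ≥ 1 and let v_1, …, v_r ∈ ℤ^d be linearly independent over ℚ. Let C = {t_1 v_1 + … + t_r v_r : t_i ∈ ℚ, t_i ≥ 0} ⊆ ℚ^d be the simplicial cone they generate, and let Π = {t_1 v_1 + … + t_r v_r : t_i ∈ ℚ, 0 ≤ t_i < 1} be the half-open fundamental parallelepiped. Then (∏_{i=1}^r (1 − e^{v_i})) ⋆ 1_{C ∩ ℤ^d} = 1_{Π ∩ ℤ^d}. In particular this convolution is finitely supported, so 1_{C ∩ ℤ^d} is summable. -/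
lemma conv_apply {d : ℕ} (D : AddMonoidAlgebra ℚ (Fin d → ℤ)) (f : (Fin d → ℤ) → ℚ) (x) :
    conv D f x = D.coeff.sum (fun m c => c * f (x - m)) := rfl

lemma conv_add {d : ℕ} (D E : AddMonoidAlgebra ℚ (Fin d → ℤ)) (f : (Fin d → ℤ) → ℚ) (x) :
    conv (D + E) f x = conv D f x + conv E f x := by
  simp only [conv_apply, AddMonoidAlgebra.coeff_add]
  exact Finsupp.sum_add_index' (by simp) (fun m c1 c2 => add_mul _ _ _)

lemma conv_single {d : ℕ} (m : Fin d → ℤ) (c : ℚ) (f : (Fin d → ℤ) → ℚ) (x) :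
    conv (AddMonoidAlgebra.single m c) f x = c * f (x - m) := by
  simp only [conv_apply, AddMonoidAlgebra.coeff_single]
  exact Finsupp.sum_single_index (by simp)

lemma conv_zero {d : ℕ} (f : (Fin d → ℤ) → ℚ) (x) :
    conv (0 : AddMonoidAlgebra ℚ (Fin d → ℤ)) f x = 0 := by
  simp [conv]

lemma conv_sum {d : ℕ} {ι : Type*} (s : Finset ι) (D : ι → AddMonoidAlgebra ℚ (Fin d → ℤ))
    (f : (Fin d → ℤ) → ℚ) (x) :
    conv (∑ t ∈ s, D t) f x = ∑ t ∈ s, conv (D t) f x := by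
  classical
  induction s using Finset.induction with
  | empty => simp [conv_zero]
  | @insert a s h ih => simp [Finset.sum_insert h, conv_add, ih]

lemma expn_sum {d r : ℕ} (v : Fin r → (Fin d → ℤ)) (S : Finset (Fin r)) :
    ∏ i ∈ S, expn (v i) = expn (∑ i ∈ S, v i) := by
  classical
  induction S using Finset.induction with
  | empty => simp [expn, AddMonoidAlgebra.one_def]
  | @insert a s h ih =>
    rw [Finset.prod_insert h, ih, Finset.sum_insert h]
    simp [expn, AddMonoidAlgebra.single_mul_single]

lemma prod_expand {d r : ℕ} (v : Fin r → (Fin d → ℤ)) :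
    (∏ i, (1 - expn (v i))) =
      ∑ S ∈ (Finset.univ : Finset (Fin r)).powerset,
        AddMonoidAlgebra.single (∑ i ∈ S, v i) ((-1 : ℚ) ^ S.card) := by
  classical
  have h1 : ∀ i : Fin r, (1 - expn (v i)) = (-expn (v i)) + 1 := fun i => by ring
  rw [Finset.prod_congr rfl (fun i _ => h1 i), Finset.prod_add]
  refine Finset.sum_congr rfl fun S hS => ?_
  rw [Finset.prod_const_one, mul_one]
  have : ∏ i ∈ S, (-expn (v i))
      = (-1 : AddMonoidAlgebra ℚ (Fin d → ℤ)) ^ S.card * ∏ i ∈ S, expn (v i) := by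
    rw [← Finset.prod_const, ← Finset.prod_mul_distrib]
    exact Finset.prod_congr rfl fun i _ => by ring
  rw [this, expn_sum]
  have h2 : (-1 : AddMonoidAlgebra ℚ (Fin d → ℤ)) = AddMonoidAlgebra.single 0 (-1) := by
    rw [AddMonoidAlgebra.one_def]
    exact (AddMonoidAlgebra.single_neg 0 1).symm
  rw [h2, AddMonoidAlgebra.single_pow]
  simp [expn, AddMonoidAlgebra.single_mul_single]

lemma conv_prod_formula {d r : ℕ} (v : Fin r → (Fin d → ℤ)) (f : (Fin d → ℤ) → ℚ) (x) :
    conv (∏ i, (1 - expn (v i))) f x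
      = ∑ S ∈ (Finset.univ : Finset (Fin r)).powerset,
          (-1 : ℚ) ^ S.card * f (x - ∑ i ∈ S, v i) := by
  rw [prod_expand, conv_sum]
  exact Finset.sum_congr rfl fun S _ => conv_single _ _ _ _

/-- For `v_1, …, v_r ∈ ℤ^d` linearly independent over `ℚ`, generating the simplicial
cone `C` with half-open fundamental parallelepiped `Par`, one has
`(∏ (1 - e^{v_i})) ⋆ 1_{C ∩ ℤ^d} = 1_{Par ∩ ℤ^d}`; in particular this convolution is
finitely supported, so `1_{C ∩ ℤ^d}` is summable. -/
theorem simplicial_cone_convolution {d : ℕ} (hd : 1 ≤ d) (r : ℕ) (v : Fin r → (Fin d → ℤ))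
    (hv : LinearIndependent ℚ (fun i => (fun j => ((v i j : ℚ)))))
    (C Par : Set (Fin d → ℚ))
    (hC : C = {x : Fin d → ℚ | ∃ t : Fin r → ℚ,
      (∀ i, 0 ≤ t i) ∧ x = ∑ i, t i • (fun j => ((v i j : ℚ)))})
    (hPar : Par = {x : Fin d → ℚ | ∃ t : Fin r → ℚ,
      (∀ i, 0 ≤ t i ∧ t i < 1) ∧ x = ∑ i, t i • (fun j => ((v i j : ℚ)))}) :
    conv (∏ i, (1 - expn (v i)))
        (Set.indicator {x : Fin d → ℤ | (fun j => ((x j : ℚ))) ∈ C} 1) =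
      Set.indicator {x : Fin d → ℤ | (fun j => ((x j : ℚ))) ∈ Par} 1 ∧
    (Function.support (conv (∏ i, (1 - expn (v i)))
        (Set.indicator {x : Fin d → ℤ | (fun j => ((x j : ℚ))) ∈ C} 1))).Finite ∧
    (∃ (r' : ℕ) (m : Fin r' → (Fin d → ℤ)), (∀ i, m i ≠ 0) ∧
      (Function.support (conv (∏ i, (1 - expn (m i)))
        (Set.indicator {x : Fin d → ℤ | (fun j => ((x j : ℚ))) ∈ C} 1))).Finite) := by
  classical
  set V : Fin r → (Fin d → ℚ) := fun i j => (v i j : ℚ) with hVdef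
  -- uniqueness of coefficients
  have huniq : ∀ t s : Fin r → ℚ, ∑ i, t i • V i = ∑ i, s i • V i → t = s := by
    intro t s h
    have h2 := Fintype.linearIndependent_iff.mp hv (fun i => t i - s i) ?_
    · funext i; have := h2 i; linarith
    · simp only [sub_smul, Finset.sum_sub_distrib]
      rw [show (∑ i, t i • V i) = ∑ i, s i • V i from h, sub_self]
  -- cast lemmas
  have hcast : ∀ (x m : Fin d → ℤ),
      (fun j => (((x - m) j : ℤ) : ℚ)) = (fun j => ((x j : ℤ) : ℚ)) - (fun j => ((m j : ℤ) : ℚ)) := by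
    intro x m; funext j; simp [Pi.sub_apply]
  have hsumcast : ∀ S : Finset (Fin r),
      (fun j => (((∑ i ∈ S, v i) j : ℤ) : ℚ)) = ∑ i ∈ S, V i := by
    intro S; funext j
    simp only [Finset.sum_apply, hVdef]
    push_cast
    rfl
  -- splitting sums lemma
  have key : ∀ (S : Finset (Fin r)) (u : Fin r → ℚ),
      ∑ i, (u i + if i ∈ S then (1:ℚ) else 0) • V i
        = (∑ i, u i • V i) + ∑ i ∈ S, V i := by
    intro S u
    simp only [add_smul, Finset.sum_add_distrib, ite_smul, one_smul, zero_smul]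
    rw [Finset.sum_ite_mem, Finset.univ_inter]
  -- main identity
  have hmain : conv (∏ i, (1 - expn (v i)))
      (Set.indicator {x : Fin d → ℤ | (fun j => ((x j : ℚ))) ∈ C} 1)
      = Set.indicator {x : Fin d → ℤ | (fun j => ((x j : ℚ))) ∈ Par} 1 := by
    funext x
    rw [conv_prod_formula]
    set X : Fin d → ℚ := fun j => (x j : ℚ) with hX
    by_cases hxC : X ∈ C
    · rw [hC] at hxC
      obtain ⟨t, ht0, hXt⟩ := hxC
      set T : Finset (Fin r) := Finset.univ.filter (fun i => 1 ≤ t i) with hT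
      have hmem : ∀ S : Finset (Fin r),
          ((x - ∑ i ∈ S, v i) ∈ {y : Fin d → ℤ | (fun j => ((y j : ℚ))) ∈ C}) ↔ S ∈ T.powerset := by
        intro S
        rw [Finset.mem_powerset]
        constructor
        · intro hmem'
          have : (fun j => (((x - ∑ i ∈ S, v i) j : ℤ) : ℚ)) ∈ C := hmem'
          rw [hcast, hsumcast, hC] at this
          obtain ⟨s, hs0, hseq⟩ := this
          have hXeq : ∑ i, t i • V i = ∑ i, (s i + if i ∈ S then (1:ℚ) else 0) • V i := by
            rw [key, ← hseq, sub_add_cancel]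
            exact hXt.symm
          have := huniq _ _ hXeq
          intro i hi
          simp only [hT, Finset.mem_filter, Finset.mem_univ, true_and]
          have h3 : t i = s i + 1 := by
            have := congrFun this i
            simpa [hi] using this
          have := hs0 i
          linarith
        · intro hST
          show (fun j => (((x - ∑ i ∈ S, v i) j : ℤ) : ℚ)) ∈ C
          rw [hcast, hsumcast, hC]
          refine ⟨fun i => t i - if i ∈ S then 1 else 0, ?_, ?_⟩
          · intro i
            by_cases hi : i ∈ S
            · have : i ∈ T := hST hi
              simp only [hT, Finset.mem_filter] at this
              simp [hi]; linarith [this.2]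
            · simp [hi]; exact ht0 i
          · have := key S (fun i => t i - if i ∈ S then 1 else 0)
            simp only [sub_add_cancel] at this
            rw [← hXt] at this
            show X - ∑ i ∈ S, V i = ∑ i, (t i - if i ∈ S then 1 else 0) • V i
            rw [this, add_sub_cancel_right]
      have hterms : ∀ S ∈ (Finset.univ : Finset (Fin r)).powerset,
          (-1 : ℚ) ^ S.card *
            (Set.indicator {y : Fin d → ℤ | (fun j => ((y j : ℚ))) ∈ C} 1) (x - ∑ i ∈ S, v i)
          = if S ∈ T.powerset then (-1 : ℚ) ^ S.card else 0 := by
        intro S _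
        by_cases hST : S ∈ T.powerset
        · rw [if_pos hST, Set.indicator_of_mem ((hmem S).mpr hST)]
          simp
        · rw [if_neg hST, Set.indicator_of_notMem (fun h => hST ((hmem S).mp h))]
          simp
      rw [Finset.sum_congr rfl hterms, Finset.sum_ite_mem]
      have hinter : (Finset.univ : Finset (Fin r)).powerset ∩ T.powerset = T.powerset := by
        apply Finset.inter_eq_right.mpr
        exact Finset.powerset_mono.mpr (Finset.subset_univ T)
      rw [hinter]
      have hps : (∑ S ∈ T.powerset, (-1 : ℚ) ^ S.card)
          = if T = ∅ then 1 else 0 := by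
        have := Finset.sum_powerset_neg_one_pow_card (x := T)
        have h4 : ((∑ m ∈ T.powerset, (-1 : ℤ) ^ m.card : ℤ) : ℚ)
            = ∑ m ∈ T.powerset, (-1 : ℚ) ^ m.card := by push_cast; rfl
        rw [← h4, this]
        split <;> simp
      rw [hps]
      by_cases hTe : T = ∅
      · rw [if_pos hTe]
        have hxPar : x ∈ {y : Fin d → ℤ | (fun j => ((y j : ℚ))) ∈ Par} := by
          show X ∈ Par
          rw [hPar]
          refine ⟨t, fun i => ⟨ht0 i, ?_⟩, hXt⟩
          by_contra h
          have : i ∈ T := by simp [hT]; linarith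
          simp [hTe] at this
        rw [Set.indicator_of_mem hxPar]; simp
      · rw [if_neg hTe]
        have hxPar : x ∉ {y : Fin d → ℤ | (fun j => ((y j : ℚ))) ∈ Par} := by
          intro h
          have : X ∈ Par := h
          rw [hPar] at this
          obtain ⟨s, hs, hXs⟩ := this
          have hts : t = s := huniq t s (by rw [← hXt, ← hXs])
          apply hTe
          rw [hT, Finset.filter_eq_empty_iff]
          intro i _
          have := (hs i).2
          rw [hts]; linarith
        rw [Set.indicator_of_notMem hxPar]
    · -- x not in the cone
      have hzero : ∀ S ∈ (Finset.univ : Finset (Fin r)).powerset,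
          (-1 : ℚ) ^ S.card *
            (Set.indicator {y : Fin d → ℤ | (fun j => ((y j : ℚ))) ∈ C} 1) (x - ∑ i ∈ S, v i)
          = 0 := by
        intro S _
        have hnot : (x - ∑ i ∈ S, v i) ∉ {y : Fin d → ℤ | (fun j => ((y j : ℚ))) ∈ C} := by
          intro h
          have : (fun j => (((x - ∑ i ∈ S, v i) j : ℤ) : ℚ)) ∈ C := h
          rw [hcast, hsumcast, hC] at this
          obtain ⟨s, hs0, hseq⟩ := this
          apply hxC
          rw [hC]
          refine ⟨fun i => s i + if i ∈ S then 1 else 0, ?_, ?_⟩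
          · intro i; by_cases hi : i ∈ S <;> simp [hi] <;> [linarith [hs0 i]; exact hs0 i]
          · rw [key, ← hseq]
            show X = X - (∑ i ∈ S, V i) + ∑ i ∈ S, V i
            ring
        rw [Set.indicator_of_notMem hnot, mul_zero]
      rw [Finset.sum_congr rfl hzero, Finset.sum_const_zero]
      have hxPar : x ∉ {y : Fin d → ℤ | (fun j => ((y j : ℚ))) ∈ Par} := by
        intro h
        have : X ∈ Par := h
        apply hxC
        rw [hPar] at this; rw [hC]
        obtain ⟨s, hs, hXs⟩ := this
        exact ⟨s, fun i => (hs i).1, hXs⟩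
      rw [Set.indicator_of_notMem hxPar]
    -- end hmain
  have hfin : (Function.support (conv (∏ i, (1 - expn (v i)))
      (Set.indicator {x : Fin d → ℤ | (fun j => ((x j : ℚ))) ∈ C} 1))).Finite := by
    rw [hmain]
    set M : Fin d → ℤ := fun j => ∑ i, |v i j| with hM
    apply Set.Finite.subset
      (Set.Finite.pi (fun j : Fin d => Set.finite_Icc (-(M j)) (M j)))
    intro x hx
    have hx' : x ∈ {y : Fin d → ℤ | (fun j => ((y j : ℚ))) ∈ Par} := by
      by_contra h
      rw [Function.mem_support, Set.indicator_of_notMem h] at hx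
      exact hx rfl
    have hXP : (fun j => ((x j : ℚ))) ∈ Par := hx'
    rw [hPar] at hXP
    obtain ⟨t, ht, hXt⟩ := hXP
    intro j _
    simp only [Set.mem_Icc]
    have hb : |(x j : ℚ)| ≤ ((M j : ℤ) : ℚ) := by
      have h1 : (x j : ℚ) = ∑ i, t i * (v i j : ℚ) := by
        have := congrFun hXt j
        simpa [Finset.sum_apply] using this
      rw [h1]
      calc |∑ i, t i * (v i j : ℚ)| ≤ ∑ i, |t i * (v i j : ℚ)| :=
            Finset.abs_sum_le_sum_abs _ _
        _ ≤ ∑ i, |(v i j : ℚ)| := by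
            apply Finset.sum_le_sum
            intro i _
            rw [abs_mul]
            have h2 : |t i| ≤ 1 := by
              rw [abs_le]; constructor <;> [linarith [(ht i).1]; linarith [(ht i).2]]
            calc |t i| * |(v i j : ℚ)| ≤ 1 * |(v i j : ℚ)| :=
                  mul_le_mul_of_nonneg_right h2 (abs_nonneg _)
              _ = |(v i j : ℚ)| := one_mul _
        _ = ((M j : ℤ) : ℚ) := by rw [hM]; push_cast; rfl
    have := abs_le.mp hb
    constructor
    · exact_mod_cast this.1
    · exact_mod_cast this.2
  refine ⟨hmain, hfin, r, v, ?_, hfin⟩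
  intro i hvi
  apply hv.ne_zero i
  funext j
  show ((v i j : ℤ) : ℚ) = 0
  rw [hvi]
  simp
end
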